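/- Let G : ℝ → ℝ be a continuous, strictly increasing bijection of ℝ onto ℝ, let b̃ : ℝ → ℝ be continuous and one-sided Lipschitz with constant L_b > 0, let σ̃ : ℝ → [0, ∞) be Lipschitz with constant L_σ > 0, let h ∈ (0, 1/L_b), and let A > 0 satisfy L_σ·A < 1. For w ∈ [−A, A] define Φ_w : ℝ → ℝ by letting Φ_w(x) be the unique y ∈ ℝ with G(y) − h·b̃(G(y)) = G(x) + σ̃(G(x))·w (this y exists and is unique). Then: (a) for each fixed w ∈ [−A, A], the map x ↦ Φ_w(x) is strictly increasing; and (b) for each fixed x ∈ ℝ, the map w ↦ Φ_w(x) is nondecreasing on [−A, A]. Consequently the transformed monotone semi-implicit Euler–Maruyama scheme with truncation level A is stochastically increasing. -/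
import Mathlib


/-- monotonicity of one step of the transformed monotone semi-implicit
Euler–Maruyama scheme.  With `G` a continuous strictly increasing bijection, `b̃` continuous
and one-sided Lipschitz with constant `L_b`, `σ̃ ≥ 0` Lipschitz with constant `L_σ`,
`h ∈ (0, 1/L_b)` and `L_σ·A < 1`, the map `Φ_w` defined by
`G (Φ_w x) - h·b̃(G (Φ_w x)) = G x + σ̃(G x)·w` exists, is unique, is strictly increasing in
`x` for fixed `w ∈ [-A, A]`, and is nondecreasing in `w ∈ [-A, A]` for fixed `x`. -/
theorem stmt_3 (G : ℝ → ℝ) (hGcont : Continuous G) (hGmono : StrictMono G)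
    (hGbij : Function.Bijective G)
    (btilde : ℝ → ℝ) (hbcont : Continuous btilde) (Lb : ℝ) (hLb : 0 < Lb)
    (hosl : ∀ x y : ℝ, (x - y) * (btilde x - btilde y) ≤ Lb * (x - y) ^ 2)
    (σtilde : ℝ → ℝ) (hσnn : ∀ x, 0 ≤ σtilde x) (Lσ : ℝ) (hLσ : 0 < Lσ)
    (hσlip : ∀ x y : ℝ, |σtilde x - σtilde y| ≤ Lσ * |x - y|)
    (h : ℝ) (hh : h ∈ Set.Ioo 0 (1 / Lb))
    (A : ℝ) (hA : 0 < A) (hLA : Lσ * A < 1) :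
    (∀ w ∈ Set.Icc (-A) A, ∀ x : ℝ,
      ∃! y : ℝ, G y - h * btilde (G y) = G x + σtilde (G x) * w) ∧
    (∀ Φ : ℝ → ℝ → ℝ,
      (∀ w ∈ Set.Icc (-A) A, ∀ x : ℝ,
        G (Φ w x) - h * btilde (G (Φ w x)) = G x + σtilde (G x) * w) →
      ((∀ w ∈ Set.Icc (-A) A, StrictMono (fun x : ℝ => Φ w x)) ∧
        (∀ x : ℝ, ∀ w ∈ Set.Icc (-A) A, ∀ w' ∈ Set.Icc (-A) A,
          w ≤ w' → Φ w x ≤ Φ w' x))) := by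
  obtain ⟨hh0, hh1⟩ := hh
  have hhLb : h * Lb < 1 := (lt_div_iff₀ hLb).mp hh1
  have hc : 0 < 1 - h * Lb := by linarith
  set g : ℝ → ℝ := fun u => u - h * btilde u with hg
  have hkey : ∀ u v : ℝ, v ≤ u → (1 - h * Lb) * (u - v) ≤ g u - g v := by
    intro u v huv
    rcases eq_or_lt_of_le huv with rfl | hlt
    · simp
    · have h2 : 0 < u - v := sub_pos.mpr hlt
      have hb : btilde u - btilde v ≤ Lb * (u - v) := by
        have h1 := hosl u v
        nlinarith
      have := mul_le_mul_of_nonneg_left hb hh0.le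
      simp only [hg]
      nlinarith
  have gmono : StrictMono g := by
    intro v u hlt
    have := hkey u v hlt.le
    nlinarith [mul_pos hc (sub_pos.mpr hlt)]
  have gcont : Continuous g := continuous_id.sub (continuous_const.mul hbcont)
  have gsurj : Function.Surjective g := by
    apply gcont.surjective
    · refine Filter.tendsto_atTop_mono' Filter.atTop ?_
        (Filter.tendsto_atTop_add_const_left _ (g 0) (Filter.Tendsto.const_mul_atTop hc Filter.tendsto_id))
      filter_upwards [Filter.eventually_ge_atTop (0 : ℝ)] with u hu
      have := hkey u 0 hu
      simp only [id] at *
      linarith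
    · refine Filter.tendsto_atBot_mono' Filter.atBot ?_
        (Filter.tendsto_atBot_add_const_left _ (g 0) (Filter.Tendsto.const_mul_atBot hc Filter.tendsto_id))
      filter_upwards [Filter.eventually_le_atBot (0 : ℝ)] with u hu
      have := hkey 0 u hu
      simp only [id] at *
      linarith
  have Fmono : StrictMono (fun y => g (G y)) := gmono.comp hGmono
  have hFeq : ∀ y, g (G y) = G y - h * btilde (G y) := fun y => rfl
  constructor
  · intro w hw x
    obtain ⟨u, hu⟩ := gsurj (G x + σtilde (G x) * w)
    obtain ⟨y, rfl⟩ := hGbij.2 u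
    refine ⟨y, hu, ?_⟩
    intro y' hy'
    exact Fmono.injective (by rw [hFeq y', hy']; exact hu.symm)
  · intro Φ hΦ
    constructor
    · intro w hw x x' hxx
      have hGlt : G x < G x' := hGmono hxx
      have hrhs : G x + σtilde (G x) * w < G x' + σtilde (G x') * w := by
        have h1 := hσlip (G x') (G x)
        have h2 : |w| ≤ A := abs_le.mpr ⟨hw.1, hw.2⟩
        have h3 : |(σtilde (G x') - σtilde (G x)) * w| ≤ Lσ * |G x' - G x| * A := by
          rw [abs_mul]
          exact mul_le_mul h1 h2 (abs_nonneg _) (by positivity)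
        have h4 : |G x' - G x| = G x' - G x := abs_of_pos (sub_pos.mpr hGlt)
        rw [h4] at h3
        have h5 : Lσ * (G x' - G x) * A < G x' - G x := by
          have := sub_pos.mpr hGlt
          nlinarith
        have := (abs_le.mp h3).1
        linarith
      have : g (G (Φ w x)) < g (G (Φ w x')) := by
        rw [hFeq, hFeq, hΦ w hw x, hΦ w hw x']
        exact hrhs
      exact Fmono.lt_iff_lt.mp this
    · intro x w hw w' hw' hww
      have : g (G (Φ w x)) ≤ g (G (Φ w' x)) := by
        rw [hFeq, hFeq, hΦ w hw x, hΦ w' hw' x]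
        have := hσnn (G x)
        nlinarith
      exact Fmono.le_iff_le.mp this
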